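/- Every finitely generated additive commutative monoid is finitely presented: if M is an additive commutative monoid with AddMonoid.FG M, then there exist n : ℕ, a surjective additive monoid homomorphism f : (Fin n → ℕ) →+ M, and a finite set S of pairs of elements of Fin n → ℕ such that the kernel congruence AddCon.ker f is the additive congruence generated by S (i.e., AddCon.ker f = addConGen (fun x y => (x, y) ∈ S)). -/

import Mathlib

open Finsupp

noncomputable section RedeiAux

variable {n : ℕ}

local notation "σ" => Fin n → ℕ
local notation "R" => AddMonoidAlgebra ℤ (Fin n → ℕ)

private lemma redei_noeth (n : ℕ) : IsNoetherianRing (AddMonoidAlgebra ℤ (Fin n → ℕ)) := by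
  have : IsNoetherianRing (AddMonoidAlgebra ℤ (Fin n →₀ ℕ)) :=
    inferInstanceAs (IsNoetherianRing (MvPolynomial (Fin n) ℤ))
  exact isNoetherianRing_of_ringEquiv _
    (AddMonoidAlgebra.domCongr ℤ ℤ
      (Finsupp.addEquivFunOnFinite : (Fin n →₀ ℕ) ≃+ (Fin n → ℕ))).toRingEquiv

/-- the set of "binomial" generators associated to a congruence -/
private def Dset (c : AddCon (Fin n → ℕ)) : Set R :=
  (fun p : (Fin n → ℕ) × (Fin n → ℕ) =>
    (AddMonoidAlgebra.single p.1 (1 : ℤ) - AddMonoidAlgebra.single p.2 1 : R)) '' {p | c p.1 p.2}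

private lemma key (c : AddCon (Fin n → ℕ)) (a b : Fin n → ℕ)
    (h : (AddMonoidAlgebra.single a (1:ℤ) - AddMonoidAlgebra.single b 1 : R) ∈ Ideal.span (Dset c)) :
    c a b := by
  let φ : R →+* AddMonoidAlgebra ℤ c.Quotient :=
    AddMonoidAlgebra.mapDomainRingHom ℤ c.mk'
  have hker : Ideal.span (Dset c) ≤ RingHom.ker φ := by
    rw [Ideal.span_le]
    rintro x ⟨⟨u, v⟩, huv, rfl⟩
    simp only [SetLike.mem_coe]
    have heq : c.mk' u = c.mk' v := by
      simpa [AddCon.mk'] using c.eq.mpr huv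
    have hw : ∀ w : Fin n → ℕ, φ (AddMonoidAlgebra.single w (1:ℤ)) = AddMonoidAlgebra.single (c.mk' w) 1 :=
      fun w => by simp [φ, AddMonoidAlgebra.mapDomainRingHom, AddMonoidAlgebra.mapDomain_single,
        AddCon.mk']
    rw [RingHom.mem_ker, map_sub, hw, hw, heq, sub_self]
  have hw : ∀ w : Fin n → ℕ, φ (AddMonoidAlgebra.single w (1:ℤ)) = AddMonoidAlgebra.single (c.mk' w) 1 :=
    fun w => by simp [φ, AddMonoidAlgebra.mapDomainRingHom, AddMonoidAlgebra.mapDomain_single,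
      AddCon.mk']
  have h0 : φ (AddMonoidAlgebra.single a (1:ℤ) - AddMonoidAlgebra.single b 1) = 0 := hker h
  rw [map_sub, sub_eq_zero, hw, hw] at h0
  have h1 := h0
  have := AddMonoidAlgebra.single_inj.mp h1
  rcases this with ⟨h2, -⟩ | ⟨h2, -⟩
  · exact c.eq.mp (by simpa [AddCon.mk'] using h2)
  · exact absurd h2 one_ne_zero

private lemma gen_mem (c : AddCon (Fin n → ℕ)) {a b : Fin n → ℕ} (h : c a b) :
    (AddMonoidAlgebra.single a (1:ℤ) - AddMonoidAlgebra.single b 1 : R) ∈ Ideal.span (Dset c) :=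
  Ideal.subset_span ⟨(a, b), h, rfl⟩

/-- Every additive congruence on `Fin n → ℕ` is finitely generated. -/
private lemma addCon_fg (c : AddCon (Fin n → ℕ)) :
    ∃ S : Finset ((Fin n → ℕ) × (Fin n → ℕ)),
      c = addConGen (fun x y => (x, y) ∈ S) := by
  classical
  have := redei_noeth n
  -- the ideal is f.g., so generated by a finite subset of `Dset c`
  obtain ⟨T₀, hT₀⟩ := (isNoetherian_def.mp inferInstance) (Ideal.span (Dset c))
  choose Tx hTxsub hTxmem using fun x : T₀ =>
    Submodule.mem_span_finite_of_mem_span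
      (hT₀ ▸ Submodule.subset_span (x.2) : (x : R) ∈ Submodule.span _ (Dset c))
  set T : Finset R := T₀.attach.biUnion Tx with hT
  have hTsub : (T : Set R) ⊆ Dset c := by
    intro x hx
    simp only [hT, Finset.coe_biUnion, Set.mem_iUnion, Finset.mem_coe] at hx
    obtain ⟨i, -, hi⟩ := hx
    exact hTxsub i hi
  have hspan : Ideal.span (Dset c) ≤ Ideal.span (T : Set R) := by
    rw [← hT₀]
    apply Submodule.span_le.mpr
    intro x hx
    refine Submodule.span_mono ?_ (hTxmem ⟨x, hx⟩)
    intro y hy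
    simp only [hT, Finset.coe_biUnion, Set.mem_iUnion, Finset.mem_coe]
    exact ⟨⟨x, hx⟩, Finset.mem_attach _ _, hy⟩
  -- pull back `T` to a finite set of pairs
  obtain ⟨S, hSsub, hSimg⟩ := (Finset.subset_set_image_iff).mp hTsub
  refine ⟨S, ?_⟩
  set c' := addConGen (fun x y => (x, y) ∈ S) with hc'
  apply le_antisymm
  · -- c ≤ c'
    intro a b hab
    have h1 : (AddMonoidAlgebra.single a (1:ℤ) - AddMonoidAlgebra.single b 1 : R) ∈ Ideal.span (T : Set R) :=
      hspan (gen_mem c hab)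
    have h2 : (T : Set R) ⊆ Dset c' := by
      rw [← hSimg]
      intro x hx
      simp only [Finset.coe_image, Set.mem_image, Finset.mem_coe] at hx
      obtain ⟨⟨u, v⟩, hp, rfl⟩ := hx
      exact ⟨(u, v), AddConGen.Rel.of u v hp, rfl⟩
    exact key c' a b (Ideal.span_mono h2 h1)
  · -- c' ≤ c
    exact AddCon.addConGen_le.mpr fun x y hxy => hSsub hxy

end RedeiAux

/-- Rédei's theorem: every finitely generated commutative monoid is finitely presented.
That is, `M` is the quotient of a finitely generated free commutative monoid `Fin n → ℕ`
by a congruence generated by finitely many relations. -/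
theorem redei_finitely_presented (M : Type*) [AddCommMonoid M] [AddMonoid.FG M] :
    ∃ (n : ℕ) (f : (Fin n → ℕ) →+ M), Function.Surjective f ∧
      ∃ S : Finset ((Fin n → ℕ) × (Fin n → ℕ)),
        AddCon.ker f = addConGen (fun x y => (x, y) ∈ S) := by
  classical
  obtain ⟨G, hG⟩ := (inferInstance : AddMonoid.FG M).fg_top
  set n := G.card
  set g : Fin n → M := fun i => (G.equivFin.symm i : M) with hg
  set f : (Fin n → ℕ) →+ M :=
      { toFun := fun x => ∑ i, x i • g i
        map_zero' := by simp
        map_add' := fun x y => by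
          simp [add_nsmul, Finset.sum_add_distrib] } with hf
  refine ⟨n, f, ?_, addCon_fg _⟩
  intro m
  have hm : m ∈ AddSubmonoid.closure (G : Set M) := hG ▸ AddSubmonoid.mem_top m
  induction hm using AddSubmonoid.closure_induction with
  | mem s hs =>
      refine ⟨Pi.single (G.equivFin ⟨s, hs⟩) 1, ?_⟩
      simp [hf, Pi.single_apply, hg]
  | zero => exact ⟨0, map_zero f⟩
  | add x y hx hy ihx ihy =>
      obtain ⟨a, ha⟩ := ihx
      obtain ⟨b, hb⟩ := ihy
      exact ⟨a + b, by rw [map_add, ha, hb]⟩
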